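/- Let (X,Z) be jointly distributed random variables on finite sets 𝒳 × 𝒵, D : 𝒳 × 𝒵 → {0,1}, and ε > 0, k ≥ 0 with 2^k ≤ |𝒳|. Suppose that for every (Y,Z) with the same marginal Z and H∞(Y|Z=z) ≥ k for all z, we have E_{z←Z}|E_{x←X|Z=z}D(x,z) − E_{x←Y|Z=z}D(x,z)| ≥ ε. Then either for D' = D or for D' = 1−D, it holds that for all such (Y,Z): P_{(x,z)←(X,Z)}[D'(x,z) − E_{x'←Y|Z=z}D'(x',z) ≥ ε/4] ≥ ε²/16. -/

import Mathlib

open scoped Classical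
open Finset


/-- average of an `[0,1]`-valued function under nonneg weights summing to `S > 0`. -/
lemma row_avg_mem {α : Type*} [Fintype α] (r : α → ℝ) (hr : ∀ x, 0 ≤ r x)
    (S : ℝ) (hS : 0 < S) (hrS : ∑ x, r x = S) (f : α → ℝ)
    (hf0 : ∀ x, 0 ≤ f x) (hf1 : ∀ x, f x ≤ 1) :
    0 ≤ ∑ x, (r x / S) * f x ∧ ∑ x, (r x / S) * f x ≤ 1 := by
  constructor
  · exact Finset.sum_nonneg fun x _ => mul_nonneg (div_nonneg (hr x) hS.le) (hf0 x)
  · calc ∑ x, (r x / S) * f x ≤ ∑ x, (r x / S) * 1 :=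
        Finset.sum_le_sum fun x _ => mul_le_mul_of_nonneg_left (hf1 x)
          (div_nonneg (hr x) hS.le)
    _ = (∑ x, r x) / S := by simp [← Finset.sum_div]
    _ = 1 := by rw [hrS]; exact div_self hS.ne'

lemma sum_prod_eq {α ζ : Type*} [Fintype α] [Fintype ζ] (f : α × ζ → ℝ) :
    ∑ p, f p = ∑ z, ∑ x, f (x, z) := by
  rw [Fintype.sum_prod_type]; exact Finset.sum_comm

/-- Tail ⇒ average: if the tail mass is small, the per-`z` positive gap average is small. -/
lemma tail_to_avg {α ζ : Type*} [Fintype α] [Fintype ζ]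
    (P : α × ζ → ℝ) (hP0 : ∀ p, 0 ≤ P p)
    (Q : α × ζ → ℝ) (hQ0 : ∀ p, 0 ≤ Q p)
    (D' : α → ζ → ℝ) (hD0 : ∀ x z, 0 ≤ D' x z) (hD1 : ∀ x z, D' x z ≤ 1)
    (ε : ℝ) (hε : 0 < ε) :
    ∑ z, (∑ x, P (x, z)) *
        max ((∑ x, (P (x, z) / ∑ x', P (x', z)) * D' x z) -
             (∑ x, (Q (x, z) / ∑ x', P (x', z)) * D' x z)) 0
      ≤ ε / 4 * (∑ p, P p) +
        ∑ w ∈ Finset.univ.filter (fun w : α × ζ =>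
          ε / 4 ≤ D' w.1 w.2 -
            ∑ x', (Q (x', w.2) / ∑ x'', P (x'', w.2)) * D' x' w.2), P w := by
  have hsum : ∑ p, P p = ∑ z, ∑ x, P (x, z) := by
    rw [Fintype.sum_prod_type]; exact Finset.sum_comm
  have hfil : ∑ w ∈ Finset.univ.filter (fun w : α × ζ =>
          ε / 4 ≤ D' w.1 w.2 -
            ∑ x', (Q (x', w.2) / ∑ x'', P (x'', w.2)) * D' x' w.2), P w
      = ∑ z, ∑ x, (if ε / 4 ≤ D' x z -
            ∑ x', (Q (x', z) / ∑ x'', P (x'', z)) * D' x' z then P (x, z) else 0) := by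
    rw [Finset.sum_filter, Fintype.sum_prod_type]
    exact Finset.sum_comm
  rw [hsum, hfil, Finset.mul_sum, ← Finset.sum_add_distrib]
  apply Finset.sum_le_sum
  intro z _
  set Pz := ∑ x, P (x, z) with hPzdef
  set q := ∑ x', (Q (x', z) / ∑ x'', P (x'', z)) * D' x' z with hqdef
  have hq' : q = ∑ x', (Q (x', z) / Pz) * D' x' z := rfl
  have hPz0 : 0 ≤ Pz := Finset.sum_nonneg fun x _ => hP0 _
  have hq0 : 0 ≤ q := Finset.sum_nonneg fun x _ =>
    mul_nonneg (div_nonneg (hQ0 _) hPz0) (hD0 _ _)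
  have hterm : ∀ x, P (x, z) * (D' x z - q) ≤
      ε / 4 * P (x, z) + (if ε / 4 ≤ D' x z - q then P (x, z) else 0) := by
    intro x
    by_cases hx : ε / 4 ≤ D' x z - q
    · rw [if_pos hx]
      nlinarith [hP0 (x, z), hD1 x z, hq0]
    · rw [if_neg hx]
      push_neg at hx
      nlinarith [hP0 (x, z)]
  have hRHS0 : 0 ≤ ε / 4 * Pz + ∑ x, (if ε / 4 ≤ D' x z - q then P (x, z) else 0) := by
    apply add_nonneg (mul_nonneg (by positivity) hPz0)
    exact Finset.sum_nonneg fun x _ => by split <;> simp [hP0]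
  rcases le_or_gt ((∑ x, (P (x, z) / Pz) * D' x z) - q) 0 with hle | hgt
  · rw [max_eq_right hle]
    simpa using hRHS0
  · rw [max_eq_left hgt.le]
    have hkey : Pz * ((∑ x, (P (x, z) / Pz) * D' x z) - q)
        = ∑ x, P (x, z) * (D' x z - q) := by
      rcases eq_or_lt_of_le hPz0 with h0 | hpos
      · have hP00 : ∀ x, P (x, z) = 0 := by
          intro x
          have := (Finset.sum_eq_zero_iff_of_nonneg
            (fun x _ => hP0 (x, z))).mp h0.symm
          exact this x (Finset.mem_univ x)
        simp [← h0, hP00]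
      · have hne : Pz ≠ 0 := hpos.ne'
        rw [mul_sub, Finset.mul_sum]
        have h1 : ∀ x, Pz * (P (x, z) / Pz * D' x z) = P (x, z) * D' x z := by
          intro x; field_simp
        simp_rw [h1, mul_sub]
        rw [Finset.sum_sub_distrib, ← Finset.sum_mul]

    rw [hkey]
    calc ∑ x, P (x, z) * (D' x z - q)
        ≤ ∑ x, (ε / 4 * P (x, z) + (if ε / 4 ≤ D' x z - q then P (x, z) else 0)) :=
          Finset.sum_le_sum fun x _ => hterm x
      _ = ε / 4 * Pz + ∑ x, (if ε / 4 ≤ D' x z - q then P (x, z) else 0) := by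
          rw [Finset.sum_add_distrib, ← Finset.mul_sum]

lemma combo_real (e b₁ b₂ c : ℝ) (hc : 0 ≤ c) :
    ∃ t : ℝ, 0 ≤ t ∧ t ≤ 1 ∧
      c * |e - (t * b₁ + (1 - t) * b₂)| ≤ c * max (e - b₁) 0 + c * max (b₂ - e) 0 := by
  have hm1 : 0 ≤ c * max (e - b₁) 0 := mul_nonneg hc (le_max_right _ _)
  have hm2 : 0 ≤ c * max (b₂ - e) 0 := mul_nonneg hc (le_max_right _ _)
  by_cases h1 : b₁ ≤ e
  · refine ⟨1, zero_le_one, le_refl 1, ?_⟩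
    have : |e - (1 * b₁ + (1 - 1) * b₂)| = e - b₁ := by
      rw [abs_of_nonneg (by linarith)]; ring
    rw [this, max_eq_left (by linarith : (0:ℝ) ≤ e - b₁)] at *
    linarith
  · by_cases h2 : e ≤ b₂
    · refine ⟨0, le_refl 0, zero_le_one, ?_⟩
      have : |e - (0 * b₁ + (1 - 0) * b₂)| = b₂ - e := by
        rw [show e - (0 * b₁ + (1 - 0) * b₂) = -(b₂ - e) by ring, abs_neg,
          abs_of_nonneg (by linarith)]
      rw [this, max_eq_left (by linarith : (0:ℝ) ≤ b₂ - e)]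
      linarith
    · push_neg at h1 h2
      have hd : 0 < b₁ - b₂ := by linarith
      refine ⟨(e - b₂) / (b₁ - b₂), div_nonneg (by linarith) hd.le,
        (div_le_one hd).mpr (by linarith), ?_⟩
      have hcomb : (e - b₂) / (b₁ - b₂) * b₁ + (1 - (e - b₂) / (b₁ - b₂)) * b₂ = e := by
        field_simp
        ring
      rw [hcomb]
      simp only [sub_self, abs_zero, mul_zero]
      linarith

lemma glue {α ζ : Type*} [Fintype α] [Fintype ζ]
    (P Q₁ Q₂ : α × ζ → ℝ) (D : α → ζ → ℝ) (c : ℝ) (hP0 : ∀ p, 0 ≤ P p)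
    (hQ₁0 : ∀ p, 0 ≤ Q₁ p) (hQ₂0 : ∀ p, 0 ≤ Q₂ p)
    (hQ₁m : ∀ z, ∑ x, Q₁ (x, z) = ∑ x, P (x, z))
    (hQ₂m : ∀ z, ∑ x, Q₂ (x, z) = ∑ x, P (x, z))
    (hQ₁c : ∀ z, 0 < ∑ x, P (x, z) → ∀ x, Q₁ (x, z) ≤ c * ∑ x', P (x', z))
    (hQ₂c : ∀ z, 0 < ∑ x, P (x, z) → ∀ x, Q₂ (x, z) ≤ c * ∑ x', P (x', z)) :
    ∃ Q₃ : α × ζ → ℝ, (∀ p, 0 ≤ Q₃ p) ∧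
      (∀ z, ∑ x, Q₃ (x, z) = ∑ x, P (x, z)) ∧
      (∀ z, 0 < ∑ x, P (x, z) → ∀ x, Q₃ (x, z) ≤ c * ∑ x', P (x', z)) ∧
      ∀ z, (∑ x, P (x, z)) *
          |(∑ x, (P (x, z) / ∑ x', P (x', z)) * D x z) -
           (∑ x, (Q₃ (x, z) / ∑ x', P (x', z)) * D x z)|
        ≤ (∑ x, P (x, z)) * max ((∑ x, (P (x, z) / ∑ x', P (x', z)) * D x z) -
              (∑ x, (Q₁ (x, z) / ∑ x', P (x', z)) * D x z)) 0
          + (∑ x, P (x, z)) * max ((∑ x, (Q₂ (x, z) / ∑ x', P (x', z)) * D x z) -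
              (∑ x, (P (x, z) / ∑ x', P (x', z)) * D x z)) 0 := by
  have hPz0 : ∀ z, 0 ≤ ∑ x, P (x, z) := fun z => Finset.sum_nonneg fun x _ => hP0 _
  choose t ht0 ht1 htkey using fun z =>
    combo_real (∑ x, (P (x, z) / ∑ x', P (x', z)) * D x z)
      (∑ x, (Q₁ (x, z) / ∑ x', P (x', z)) * D x z)
      (∑ x, (Q₂ (x, z) / ∑ x', P (x', z)) * D x z)
      (∑ x, P (x, z)) (hPz0 z)
  refine ⟨fun p => t p.2 * Q₁ p + (1 - t p.2) * Q₂ p, ?_, ?_, ?_, ?_⟩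
  · intro p
    exact add_nonneg (mul_nonneg (ht0 _) (hQ₁0 p))
      (mul_nonneg (by linarith [ht1 p.2]) (hQ₂0 p))
  · intro z
    show ∑ x, (t z * Q₁ (x, z) + (1 - t z) * Q₂ (x, z)) = ∑ x, P (x, z)
    rw [Finset.sum_add_distrib, ← Finset.mul_sum, ← Finset.mul_sum, hQ₁m, hQ₂m]
    ring
  · intro z hz x
    show t z * Q₁ (x, z) + (1 - t z) * Q₂ (x, z) ≤ c * ∑ x', P (x', z)
    have h1 := hQ₁c z hz x
    have h2 := hQ₂c z hz x
    have := ht0 z; have := ht1 z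
    nlinarith [hQ₁0 (x, z), hQ₂0 (x, z)]
  · intro z
    have hb₃ : ∑ x, ((t z * Q₁ (x, z) + (1 - t z) * Q₂ (x, z)) / ∑ x', P (x', z)) * D x z
        = t z * (∑ x, (Q₁ (x, z) / ∑ x', P (x', z)) * D x z)
          + (1 - t z) * (∑ x, (Q₂ (x, z) / ∑ x', P (x', z)) * D x z) := by
      have hterm : ∀ x, ((t z * Q₁ (x, z) + (1 - t z) * Q₂ (x, z)) / ∑ x', P (x', z)) * D x z
          = t z * ((Q₁ (x, z) / ∑ x', P (x', z)) * D x z)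
            + (1 - t z) * ((Q₂ (x, z) / ∑ x', P (x', z)) * D x z) := by
        intro x; ring
      simp_rw [hterm]
      rw [Finset.sum_add_distrib, ← Finset.mul_sum, ← Finset.mul_sum]
    calc (∑ x, P (x, z)) *
          |(∑ x, (P (x, z) / ∑ x', P (x', z)) * D x z) -
           (∑ x, ((fun p => t p.2 * Q₁ p + (1 - t p.2) * Q₂ p) (x, z) / ∑ x', P (x', z)) * D x z)|
        = (∑ x, P (x, z)) *
          |(∑ x, (P (x, z) / ∑ x', P (x', z)) * D x z) -
           (t z * (∑ x, (Q₁ (x, z) / ∑ x', P (x', z)) * D x z)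
            + (1 - t z) * (∑ x, (Q₂ (x, z) / ∑ x', P (x', z)) * D x z))| := by rw [← hb₃]
      _ ≤ _ := htkey z


/-- Main technical lemma (statistical version): if `D` has modulus advantage at least
`ε` against every `(Y,Z)` with per-`z` min-entropy `k`, then for `D' = D` or `D' = 1−D`,
`P_{(x,z)←(X,Z)}[D'(x,z) − E_{Y|Z=z}D' ≥ ε/4] ≥ ε²/16` for every such `(Y,Z)`. -/
theorem stmt18 {α ζ : Type*} [Fintype α] [Fintype ζ]
    (P : α × ζ → ℝ) (hP0 : ∀ p, 0 ≤ P p) (hP1 : ∑ p, P p = 1)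
    (D : α → ζ → ℝ) (hD : ∀ x z, D x z = 0 ∨ D x z = 1)
    (ε : ℝ) (hε : 0 < ε) (k : ℕ) (hk : 2 ^ k ≤ Fintype.card α)
    (h : ∀ Q : α × ζ → ℝ, (∀ p, 0 ≤ Q p) → (∑ p, Q p = 1) →
      (∀ z, ∑ x, Q (x, z) = ∑ x, P (x, z)) →
      (∀ z, 0 < ∑ x, P (x, z) → ∀ x,
        Q (x, z) ≤ ((2:ℝ) ^ k)⁻¹ * ∑ x', P (x', z)) →
      ε ≤ ∑ z, (∑ x, P (x, z)) *
        |(∑ x, (P (x, z) / ∑ x', P (x', z)) * D x z) -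
         (∑ x, (Q (x, z) / ∑ x', P (x', z)) * D x z)|) :
    ∃ D' : α → ζ → ℝ, (D' = D ∨ D' = fun x z => 1 - D x z) ∧
      ∀ Q : α × ζ → ℝ, (∀ p, 0 ≤ Q p) → (∑ p, Q p = 1) →
        (∀ z, ∑ x, Q (x, z) = ∑ x, P (x, z)) →
        (∀ z, 0 < ∑ x, P (x, z) → ∀ x,
          Q (x, z) ≤ ((2:ℝ) ^ k)⁻¹ * ∑ x', P (x', z)) →
        ε ^ 2 / 16 ≤ ∑ w ∈ Finset.univ.filter (fun w : α × ζ =>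
          ε / 4 ≤ D' w.1 w.2 -
            ∑ x', (Q (x', w.2) / ∑ x'', P (x'', w.2)) * D' x' w.2), P w := by
  -- basic facts
  have hD0' : ∀ x z, 0 ≤ D x z := fun x z => by rcases hD x z with h' | h' <;> simp [h']
  have hD1' : ∀ x z, D x z ≤ 1 := fun x z => by rcases hD x z with h' | h' <;> simp [h']
  have hPz0 : ∀ z, (0:ℝ) ≤ ∑ x, P (x, z) := fun z => Finset.sum_nonneg fun x _ => hP0 _
  have hPzsum : ∑ z, ∑ x, P (x, z) = 1 := by rw [← sum_prod_eq P, hP1]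
  have h2k : (0:ℝ) < 2 ^ k := by positivity
  have hcard : (0:ℝ) < Fintype.card α := by
    have : 0 < Fintype.card α := lt_of_lt_of_le (Nat.two_pow_pos k) hk
    exact_mod_cast this
  have hkR : (2:ℝ) ^ k ≤ Fintype.card α := by exact_mod_cast hk
  -- ε ≤ 1 via the uniform Q
  have hε1 : ε ≤ 1 := by
    have huni0 : ∀ p : α × ζ, (0:ℝ) ≤ (∑ x, P (x, p.2)) / Fintype.card α :=
      fun p => div_nonneg (hPz0 p.2) hcard.le
    have hconst : ∀ z, ∑ _x : α, (∑ x, P (x, z)) / (Fintype.card α : ℝ)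
        = ∑ x, P (x, z) := by
      intro z
      rw [Finset.sum_const, Finset.card_univ, nsmul_eq_mul]
      field_simp
    have huni1 : ∑ p : α × ζ, (∑ x, P (x, p.2)) / Fintype.card α = 1 := by
      rw [sum_prod_eq]
      simp only
      calc ∑ z, ∑ _x : α, (∑ x, P (x, z)) / (Fintype.card α : ℝ)
          = ∑ z, ∑ x, P (x, z) := Finset.sum_congr rfl fun z _ => hconst z
        _ = 1 := hPzsum
    have humarg : ∀ z, ∑ x : α, ((fun p : α × ζ => (∑ x, P (x, p.2)) / Fintype.card α) (x, z))
        = ∑ x, P (x, z) := fun z => hconst z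
    have hucap : ∀ z, 0 < ∑ x, P (x, z) → ∀ x : α,
        (∑ x', P (x', z)) / Fintype.card α ≤ ((2:ℝ) ^ k)⁻¹ * ∑ x', P (x', z) := by
      intro z hz x
      rw [div_eq_mul_inv, mul_comm]
      apply mul_le_mul_of_nonneg_right _ (hPz0 z)
      exact inv_anti₀ h2k hkR
    have hu := h (fun p => (∑ x, P (x, p.2)) / Fintype.card α) huni0 huni1 humarg hucap
    have hle : ∑ z, (∑ x, P (x, z)) *
        |(∑ x, (P (x, z) / ∑ x', P (x', z)) * D x z) -
         (∑ x, (((∑ x'', P (x'', z)) / Fintype.card α) / ∑ x', P (x', z)) * D x z)|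
        ≤ ∑ z, ∑ x, P (x, z) := by
      apply Finset.sum_le_sum
      intro z _
      rcases eq_or_lt_of_le (hPz0 z) with h0 | hpos
      · rw [← h0]; simp
      · have he := row_avg_mem (fun x => P (x, z)) (fun x => hP0 _) _ hpos rfl
          (fun x => D x z) (fun x => hD0' x z) (fun x => hD1' x z)
        have hu' := row_avg_mem (fun _x : α => (∑ x'', P (x'', z)) / Fintype.card α)
          (fun _ => div_nonneg (hPz0 z) hcard.le) _ hpos (hconst z)
          (fun x => D x z) (fun x => hD0' x z) (fun x => hD1' x z)
        have habs : |(∑ x, (P (x, z) / ∑ x', P (x', z)) * D x z) -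
            (∑ x, (((∑ x'', P (x'', z)) / Fintype.card α) / ∑ x', P (x', z)) * D x z)| ≤ 1 := by
          rw [abs_le]
          constructor <;> [nlinarith [he.1, he.2, hu'.1, hu'.2]; nlinarith [he.1, he.2, hu'.1, hu'.2]]
        calc (∑ x, P (x, z)) * _ ≤ (∑ x, P (x, z)) * 1 :=
              mul_le_mul_of_nonneg_left habs (hPz0 z)
          _ = ∑ x, P (x, z) := mul_one _
    calc ε ≤ _ := hu
      _ ≤ ∑ z, ∑ x, P (x, z) := hle
      _ = 1 := hPzsum
  have hε4 : ε ^ 2 / 16 ≤ ε / 4 := by nlinarith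
  -- contradiction setup
  by_contra hcon
  push_neg at hcon
  obtain ⟨Q₁, hQ₁0, hQ₁1, hQ₁m, hQ₁c, hlt₁⟩ := hcon D (Or.inl rfl)
  obtain ⟨Q₂, hQ₂0, hQ₂1, hQ₂m, hQ₂c, hlt₂⟩ := hcon _ (Or.inr rfl)
  -- Bound 1: positive part of (e - b₁) is small
  have H1 : ∑ z, (∑ x, P (x, z)) *
      max ((∑ x, (P (x, z) / ∑ x', P (x', z)) * D x z) -
           (∑ x, (Q₁ (x, z) / ∑ x', P (x', z)) * D x z)) 0 < ε / 2 := by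
    have ht := tail_to_avg P hP0 Q₁ hQ₁0 D hD0' hD1' ε hε
    rw [hP1] at ht
    linarith
  -- Bound 2: positive part of (b₂ - e) is small, via D' = 1 - D
  have H2 : ∑ z, (∑ x, P (x, z)) *
      max ((∑ x, (Q₂ (x, z) / ∑ x', P (x', z)) * D x z) -
           (∑ x, (P (x, z) / ∑ x', P (x', z)) * D x z)) 0 < ε / 2 := by
    have ht := tail_to_avg P hP0 Q₂ hQ₂0 (fun x z => 1 - D x z)
      (fun x z => by show (0:ℝ) ≤ 1 - D x z; linarith [hD1' x z])
      (fun x z => by show 1 - D x z ≤ 1; linarith [hD0' x z]) ε hε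
    rw [hP1] at ht
    have hflip : ∀ z, (∑ x, (P (x, z) / ∑ x', P (x', z)) * (1 - D x z)) -
        (∑ x, (Q₂ (x, z) / ∑ x', P (x', z)) * (1 - D x z))
        = (∑ x, (Q₂ (x, z) / ∑ x', P (x', z)) * D x z) -
          (∑ x, (P (x, z) / ∑ x', P (x', z)) * D x z) := by
      intro z
      have hm := hQ₂m z
      simp_rw [mul_one_sub]
      rw [Finset.sum_sub_distrib, Finset.sum_sub_distrib, ← Finset.sum_div, ← Finset.sum_div, hm]
      ring
    simp_rw [hflip] at ht
    linarith
  -- Glue Q₁ and Q₂ into a single Q₃ with small advantage, contradicting h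
  obtain ⟨Q₃, hQ₃0, hQ₃m, hQ₃c, hQ₃key⟩ :=
    glue P Q₁ Q₂ D (((2:ℝ) ^ k)⁻¹) hP0 hQ₁0 hQ₂0 hQ₁m hQ₂m hQ₁c hQ₂c
  have hQ₃1 : ∑ p, Q₃ p = 1 := by
    rw [sum_prod_eq]
    calc ∑ z, ∑ x, Q₃ (x, z) = ∑ z, ∑ x, P (x, z) :=
        Finset.sum_congr rfl fun z _ => hQ₃m z
      _ = 1 := hPzsum
  have h3 := h Q₃ hQ₃0 hQ₃1 hQ₃m hQ₃c
  have hsplit : ∑ z, (∑ x, P (x, z)) *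
      |(∑ x, (P (x, z) / ∑ x', P (x', z)) * D x z) -
       (∑ x, (Q₃ (x, z) / ∑ x', P (x', z)) * D x z)|
      ≤ (∑ z, (∑ x, P (x, z)) *
          max ((∑ x, (P (x, z) / ∑ x', P (x', z)) * D x z) -
               (∑ x, (Q₁ (x, z) / ∑ x', P (x', z)) * D x z)) 0)
        + ∑ z, (∑ x, P (x, z)) *
          max ((∑ x, (Q₂ (x, z) / ∑ x', P (x', z)) * D x z) -
               (∑ x, (P (x, z) / ∑ x', P (x', z)) * D x z)) 0 := by
    rw [← Finset.sum_add_distrib]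
    exact Finset.sum_le_sum fun z _ => hQ₃key z
  linarith
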